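/- Fix an integer base g ≥ 2, a real ε > 0, and k ∈ ℕ, and let δ = δ(ε,k) > 0 be a constant such that for all sufficiently large m the number of integers in [1, m] that are not (ε,k)-normal to base g is at most m^{1−δ}. For a positive integer m, set m' = ⌊m^{1−δ/2}⌋, ℓ = ⌊(⌊log_g m²⌋ + 1)/2⌋, and b(n, m) = ⌊n²/g^ℓ⌋. Then the number of integers n ∈ [m', m] for which b(n, m) is not (ε,k)-normal to base g is o(m) as m → ∞. -/

import Mathlib

open Filter Asymptotics

/-- Number of (possibly overlapping) occurrences of the string `σ` as a contiguous
substring of the string `w` (strings are lists of base-`g` digits). -/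
def nu (w σ : List ℕ) : ℕ :=
  ((Finset.range w.length).filter (fun i => σ <+: w.drop i)).card

/-- The string of base-`g` digits of `a`, most significant digit first. -/
def digs (g a : ℕ) : List ℕ :=
  (Nat.digits g a).reverse

/-- `L(a) = ⌊log_g a⌋ + 1`, the number of base-`g` digits of `a ≥ 1`. -/
def Lg (g a : ℕ) : ℕ :=
  Nat.log g a + 1

/-- A positive integer `a` is `(ε,k)`-normal to base `g` if every string `σ` of `k`
base-`g` digits satisfies `|ν(a,σ)/L(a) − g^{−k}| ≤ ε`. -/
def EKNormalInt (g : ℕ) (ε : ℝ) (k : ℕ) (a : ℕ) : Prop :=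
  ∀ σ : List ℕ, σ.length = k → (∀ d ∈ σ, d < g) →
    |(nu (digs g a) σ : ℝ) / (Lg g a : ℝ) - 1 / (g : ℝ) ^ k| ≤ ε

set_option maxHeartbeats 1000000

lemma Pfact_a (g : ℕ) (hg : 2 ≤ g) (m : ℕ) (hm : 1 ≤ m) :
    m ^ 2 < g * (g ^ ((Nat.log g (m ^ 2) + 1) / 2)) ^ 2 := by
  have h1 : m ^ 2 < g ^ (Nat.log g (m ^ 2) + 1) := Nat.lt_pow_succ_log_self hg (m ^ 2)
  have h2 : g ^ (Nat.log g (m ^ 2) + 1) ≤ g * (g ^ ((Nat.log g (m ^ 2) + 1) / 2)) ^ 2 := by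
    rw [← pow_mul, ← pow_succ']
    exact Nat.pow_le_pow_right (by omega) (by omega)
  omega

lemma Pfact_c (g : ℕ) (hg : 2 ≤ g) (m : ℕ) (hm : 1 ≤ m) :
    g ^ ((Nat.log g (m ^ 2) + 1) / 2) ≤ g * m := by
  have hb : (g ^ ((Nat.log g (m ^ 2) + 1) / 2)) ^ 2 ≤ g * m ^ 2 := by
    have h1 : (g ^ ((Nat.log g (m ^ 2) + 1) / 2)) ^ 2 ≤ g ^ (Nat.log g (m ^ 2) + 1) := by
      rw [← pow_mul]
      exact Nat.pow_le_pow_right (by omega) (by omega)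
    have h2 : g ^ (Nat.log g (m ^ 2) + 1) ≤ g * m ^ 2 := by
      rw [pow_succ']
      exact Nat.mul_le_mul_left g (Nat.pow_log_le_self g (by positivity))
    omega
  have h1 : (g ^ ((Nat.log g (m ^ 2) + 1) / 2)) ^ 2 ≤ (g * m) ^ 2 := by
    calc (g ^ ((Nat.log g (m ^ 2) + 1) / 2)) ^ 2 ≤ g * m ^ 2 := hb
      _ ≤ (g * m) ^ 2 := by ring_nf; nlinarith
  exact le_of_pow_le_pow_left₀ two_ne_zero (Nat.zero_le _) h1


open scoped Classical in
lemma count_bound (g : ℕ) (hg : 2 ≤ g) (ε : ℝ) (k : ℕ) (m m' : ℕ) (hm : 1 ≤ m) :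
    ((Finset.Icc m' m).filter fun n =>
        ¬ EKNormalInt g ε k (n ^ 2 / g ^ ((Nat.log g (m ^ 2) + 1) / 2))).card
      ≤ (g ^ ((Nat.log g (m ^ 2) + 1) / 2) /
            (2 * max m' (Nat.sqrt (g ^ ((Nat.log g (m ^ 2) + 1) / 2)))) + 1)
          * ((Finset.Icc 1 (g ^ 2 * m)).filter fun a => ¬ EKNormalInt g ε k a).card
        + (Nat.sqrt (g ^ ((Nat.log g (m ^ 2) + 1) / 2)) + 1) := by
  classical
  set L : ℕ := Nat.log g (m ^ 2) + 1 with hL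
  set P : ℕ := g ^ (L / 2) with hPdef
  have hg1 : 1 < g := hg
  have hg0 : 0 < g := by omega
  have hP0 : 0 < P := Nat.pow_pos hg0
  -- (a) m^2 < g * P^2
  have ha : m ^ 2 < g * P ^ 2 := by
    have h1 : m ^ 2 < g ^ L := Nat.lt_pow_succ_log_self hg1 (m ^ 2)
    have h2 : g ^ L ≤ g * P ^ 2 := by
      rw [hPdef, ← pow_mul, ← pow_succ']
      exact Nat.pow_le_pow_right hg0 (by omega)
    omega
  -- (b) P^2 ≤ g * m^2
  have hb : P ^ 2 ≤ g * m ^ 2 := by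
    have h1 : P ^ 2 ≤ g ^ L := by
      rw [hPdef, ← pow_mul]
      exact Nat.pow_le_pow_right hg0 (by omega)
    have h2 : g ^ L ≤ g * m ^ 2 := by
      rw [hL, pow_succ']
      exact Nat.mul_le_mul_left g (Nat.pow_log_le_self g (by positivity))
    omega
  -- (c) P ≤ g * m
  have hc : P ≤ g * m := by
    have h1 : P ^ 2 ≤ (g * m) ^ 2 := by
      calc P ^ 2 ≤ g * m ^ 2 := hb
        _ ≤ (g * m) ^ 2 := by ring_nf; nlinarith
    exact le_of_pow_le_pow_left₀ two_ne_zero (Nat.zero_le _) h1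
  set N : ℕ := max m' (Nat.sqrt P) with hN
  have hsq1 : 1 ≤ Nat.sqrt P := by
    have := Nat.sqrt_le_sqrt (show 1 ≤ P from hP0)
    simpa using this
  have hN1 : 1 ≤ N := le_trans hsq1 (le_max_right _ _)
  set D : ℕ := P / (2 * N) with hD
  set S : Finset ℕ := (Finset.Icc m' m).filter
    (fun n => ¬ EKNormalInt g ε k (n ^ 2 / P)) with hS
  set S0 : Finset ℕ := S.filter (fun n => n ^ 2 / P = 0) with hS0
  set S1 : Finset ℕ := S.filter (fun n => ¬ (n ^ 2 / P = 0)) with hS1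
  have hsplit : S0.card + S1.card = S.card :=
    Finset.card_filter_add_card_filter_not _
  -- S0 bound
  have hS0card : S0.card ≤ Nat.sqrt P + 1 := by
    have hsub : S0 ⊆ Finset.range (Nat.sqrt P + 1) := by
      intro n hn
      simp only [hS0, Finset.mem_filter] at hn
      have h0 : n ^ 2 < P := by
        have := hn.2
        rcases Nat.lt_or_ge (n ^ 2) P with h | h
        · exact h
        · exact absurd this (by simp [Nat.div_eq_zero_iff, hP0.ne']; omega)
      have : n ≤ Nat.sqrt P := Nat.le_sqrt.mpr (by nlinarith)
      simpa [Nat.lt_succ_iff] using this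
    simpa using Finset.card_le_card hsub
  -- S1 bound
  set B : Finset ℕ := (Finset.Icc 1 (g ^ 2 * m)).filter
    (fun a => ¬ EKNormalInt g ε k a) with hB
  have hmaps : ∀ n ∈ S1, n ^ 2 / P ∈ B := by
    intro n hn
    simp only [hS1, hS, Finset.mem_filter, Finset.mem_Icc] at hn
    obtain ⟨⟨⟨hn1, hn2⟩, hn3⟩, hn4⟩ := hn
    simp only [hB, Finset.mem_filter, Finset.mem_Icc]
    refine ⟨⟨Nat.one_le_iff_ne_zero.mpr hn4, ?_⟩, hn3⟩
    have h1 : n ^ 2 / P ≤ m ^ 2 / P := Nat.div_le_div_right (Nat.pow_le_pow_left hn2 2)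
    have h2 : m ^ 2 / P < g * P := by
      rw [Nat.div_lt_iff_lt_mul hP0]
      nlinarith
    have h3 : g * P ≤ g ^ 2 * m := by nlinarith
    omega
  have hfiber : ∀ b ∈ B, (S1.filter (fun n => n ^ 2 / P = b)).card ≤ D + 1 := by
    intro b hb'
    simp only [hB, Finset.mem_filter, Finset.mem_Icc] at hb'
    have hb1 : 1 ≤ b := hb'.1.1
    set t : Finset ℕ := S1.filter (fun n => n ^ 2 / P = b) with ht
    rcases t.eq_empty_or_nonempty with h | h
    · simp [h]
    · have hmem : ∀ n ∈ t, N ≤ n ∧ b * P ≤ n ^ 2 ∧ n ^ 2 < (b + 1) * P := by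
        intro n hn
        simp only [ht, hS1, hS, Finset.mem_filter, Finset.mem_Icc] at hn
        obtain ⟨⟨⟨⟨hn1, hn2⟩, _⟩, _⟩, hfn⟩ := hn
        have hPn : P ≤ n ^ 2 := by
          by_contra hcon
          push_neg at hcon
          have : n ^ 2 / P = 0 := by simp [Nat.div_eq_zero_iff, hcon]
          omega
        have hsqn : Nat.sqrt P ≤ n := by
          calc Nat.sqrt P ≤ Nat.sqrt (n ^ 2) := Nat.sqrt_le_sqrt hPn
            _ = n := by rw [pow_two, Nat.sqrt_eq]
        refine ⟨by simp [hN]; omega, ?_, ?_⟩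
        · exact (Nat.le_div_iff_mul_le hP0).1 hfn.ge
        · rw [← Nat.div_lt_iff_lt_mul hP0, hfn]; omega
      set a : ℕ := t.min' h with hadef
      have hat : a ∈ t := t.min'_mem h
      have hsub : t ⊆ Finset.Icc a (a + D) := by
        intro n hn
        have h1 := hmem n hn
        have h2 := hmem a hat
        rw [Finset.mem_Icc]
        refine ⟨t.min'_le n hn, ?_⟩
        by_contra hcon
        push_neg at hcon
        have hP2 : P < (D + 1) * (2 * N) :=
          (Nat.div_lt_iff_lt_mul (by omega)).1 (Nat.lt_succ_self _)
        have e1 : (a + D + 1) ^ 2 ≤ n ^ 2 := Nat.pow_le_pow_left (by omega) 2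
        have e2 : a ^ 2 + 2 * N * (D + 1) ≤ (a + D + 1) ^ 2 := by nlinarith [h2.1]
        have e3 : P < 2 * N * (D + 1) := by linarith [hP2]
        linarith [h1.2.2, h2.2.1]
      calc t.card ≤ (Finset.Icc a (a + D)).card := Finset.card_le_card hsub
        _ = D + 1 := by rw [Nat.card_Icc, add_assoc, Nat.add_sub_cancel_left]
  have hS1card : S1.card ≤ (D + 1) * B.card :=
    Finset.card_le_mul_card_image_of_maps_to hmaps _ hfiber
  omega

lemma littleO_rpow (s : ℝ) (hs : s < 1) :
    (fun m : ℕ => (m : ℝ) ^ s) =o[atTop] fun m : ℕ => (m : ℝ) := by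
  rw [isLittleO_iff_tendsto']
  · have h : Tendsto (fun x : ℝ => x ^ (s - 1)) atTop (nhds 0) := by
      have := tendsto_rpow_neg_atTop (show (0:ℝ) < 1 - s by linarith)
      simpa [neg_sub] using this
    have h2 := h.comp (tendsto_natCast_atTop_atTop (R := ℝ))
    refine Tendsto.congr' ?_ h2
    filter_upwards [eventually_ge_atTop 1] with m hm
    have hm0 : (0:ℝ) < m := by exact_mod_cast hm
    simp only [Function.comp_apply]
    rw [Real.rpow_sub hm0, Real.rpow_one]
  · filter_upwards [eventually_ge_atTop 1] with m hm h
    exact absurd h (by positivity)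

lemma rpow_half_le {x y : ℝ} (hx : 0 ≤ x) (hy : 0 ≤ y) (h : x ≤ y ^ 2) :
    x ^ (1/2 : ℝ) ≤ y := by
  have h2 : x ^ (1/2:ℝ) ≤ (y^2) ^ (1/2:ℝ) := Real.rpow_le_rpow hx h (by norm_num)
  calc x ^ (1/2:ℝ) ≤ (y^2) ^ (1/2:ℝ) := h2
    _ = y := by
        rw [← Real.rpow_natCast y 2, ← Real.rpow_mul hy]
        norm_num

lemma le_of_sq_le_sq' {a b : ℝ} (ha : 0 ≤ a) (hb : 0 ≤ b) (h : a ^ 2 ≤ b ^ 2) : a ≤ b := by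
  have h2 := Real.sqrt_le_sqrt h
  rwa [Real.sqrt_sq ha, Real.sqrt_sq hb] at h2

lemma nat_lt_mul_of_sq (g P m : ℕ) (hg : 1 ≤ g) (ha : m ^ 2 < g * P ^ 2) : m < g * P := by
  have h1 : m ^ 2 < (g * P) ^ 2 := by nlinarith [mul_le_mul_left hg (g * P ^ 2)]
  exact lt_of_pow_lt_pow_left₀ 2 (Nat.zero_le _) h1


open scoped Classical in
/-- The first half `b(n,m) = ⌊n²/g^ℓ⌋` of the digits of `n²` (for `n ∈ [m', m]`, where
`m' = ⌊m^{1−δ/2}⌋` and `ℓ = ⌊L(m²)/2⌋`) is `(ε,k)`-normal with `o(m)` exceptions. -/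
theorem first_half_of_squares_normal (g : ℕ) (hg : 2 ≤ g) (ε : ℝ) (hε : 0 < ε) (k : ℕ)
    (δ : ℝ) (hδ : 0 < δ)
    (hCE : ∀ᶠ m : ℕ in atTop,
      (((Finset.Icc 1 m).filter fun a => ¬ EKNormalInt g ε k a).card : ℝ)
        ≤ (m : ℝ) ^ (1 - δ)) :
    (fun m : ℕ =>
        (((Finset.Icc ⌊(m : ℝ) ^ (1 - δ / 2)⌋₊ m).filter fun n =>
            ¬ EKNormalInt g ε k (n ^ 2 / g ^ ((Nat.log g (m ^ 2) + 1) / 2))).card : ℝ))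
      =o[atTop] fun m : ℕ => (m : ℝ) := by
  classical
  set δ₀ : ℝ := min δ 1 with hδ₀def
  have hδ₀ : 0 < δ₀ := lt_min hδ one_pos
  have hδ₀1 : δ₀ ≤ 1 := min_le_right _ _
  have hG : (2:ℝ) ≤ (g:ℝ) := by exact_mod_cast hg
  have hG0 : (0:ℝ) < (g:ℝ) := by linarith
  have hO : (fun m : ℕ => (g:ℝ)^4 *
      ((m:ℝ) ^ (1 - δ₀/2) + ((m:ℝ) ^ (1 - δ₀) + ((m:ℝ) ^ (1/2 : ℝ) + (m:ℝ) ^ (0:ℝ)))))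
      =o[atTop] (fun m : ℕ => (m:ℝ)) := by
    refine IsLittleO.const_mul_left ?_ _
    exact (littleO_rpow _ (by linarith)).add ((littleO_rpow _ (by linarith)).add
      ((littleO_rpow _ (by norm_num)).add (littleO_rpow _ (by norm_num))))
  refine IsBigO.trans_isLittleO ?_ hO
  rw [isBigO_iff]
  refine ⟨1, ?_⟩
  have htend : Tendsto (fun m : ℕ => g ^ 2 * m) atTop atTop := by
    refine tendsto_atTop_atTop.mpr fun b => ⟨b, fun m hm => ?_⟩
    have h1 : 1 ≤ g ^ 2 := Nat.one_le_pow _ _ (by omega)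
    nlinarith
  have hE1 := htend.eventually hCE
  filter_upwards [hE1, eventually_ge_atTop (4 * g ^ 2)] with m hbB hm4
  have hm1 : 1 ≤ m := by nlinarith
  have hmR : (1:ℝ) ≤ (m:ℝ) := by exact_mod_cast hm1
  have hm0R : (0:ℝ) < (m:ℝ) := by linarith
  have hkey := count_bound g hg ε k m (⌊(m : ℝ) ^ (1 - δ / 2)⌋₊) hm1
  have ha := Pfact_a g hg m hm1
  have hc := Pfact_c g hg m hm1
  set P : ℕ := g ^ ((Nat.log g (m ^ 2) + 1) / 2) with hPdef
  set m' : ℕ := ⌊(m : ℝ) ^ (1 - δ / 2)⌋₊ with hm'def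
  set N : ℕ := max m' (Nat.sqrt P) with hNdef
  set D : ℕ := P / (2 * N) with hDdef
  set Bc : ℕ := ((Finset.Icc 1 (g ^ 2 * m)).filter fun a => ¬ EKNormalInt g ε k a).card
    with hBcdef
  have hg0 : 0 < g := by omega
  have hP0 : 0 < P := Nat.pow_pos hg0
  -- √m ≥ 2g
  have hsq2 : ((m:ℝ)^(1/2:ℝ))^2 = (m:ℝ) := by
    rw [← Real.rpow_natCast ((m:ℝ)^(1/2:ℝ)) 2, ← Real.rpow_mul (le_of_lt hm0R)]
    norm_num
  have hsqm : 2 * (g:ℝ) ≤ (m:ℝ) ^ (1/2 : ℝ) := by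
    have h1 : ((2*(g:ℝ))^2) ≤ (m:ℝ) := by
      have h2 : ((4 * g ^ 2 : ℕ) : ℝ) ≤ (m:ℝ) := by exact_mod_cast hm4
      push_cast at h2
      nlinarith
    exact le_of_sq_le_sq' (by positivity) (Real.rpow_nonneg (le_of_lt hm0R) _)
      (by rw [hsq2]; exact h1)
  -- N lower bound
  have hNlow : (m:ℝ) ^ (1 - δ₀/2) / (2*(g:ℝ)) ≤ (N:ℝ) := by
    rcases le_or_gt δ 1 with hcase | hcase
    · have hδeq : δ₀ = δ := min_eq_left hcase
      have h1 : (m:ℝ) ^ (1 - δ/2) - 1 ≤ (m':ℝ) := by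
        have h0 := Nat.lt_floor_add_one ((m : ℝ) ^ (1 - δ / 2))
        rw [hm'def]
        push_cast
        linarith
      have h2 : (2:ℝ) ≤ (m:ℝ) ^ (1 - δ/2) := by
        calc (2:ℝ) ≤ 2*(g:ℝ) := by linarith
          _ ≤ (m:ℝ) ^ (1/2:ℝ) := hsqm
          _ ≤ (m:ℝ) ^ (1 - δ/2) := Real.rpow_le_rpow_of_exponent_le hmR (by linarith)
      have h3 : (m':ℝ) ≤ (N:ℝ) := by exact_mod_cast (le_max_left m' (Nat.sqrt P))
      have h4 : (m:ℝ) ^ (1 - δ₀/2) / (2*(g:ℝ)) ≤ (m:ℝ) ^ (1 - δ/2) / 2 := by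
        rw [hδeq]
        apply div_le_div_of_nonneg_left (by positivity) (by norm_num) (by linarith)
      linarith
    · have hδeq : δ₀ = 1 := min_eq_right hcase.le
      have hexp : 1 - δ₀/2 = (1/2 : ℝ) := by rw [hδeq]; norm_num
      rw [hexp]
      set s : ℕ := Nat.sqrt P with hsdef
      have hsP : P < (s + 1) * (s + 1) := Nat.lt_succ_sqrt P
      have hmgP : m < g * P := nat_lt_mul_of_sq g P m (by omega) ha
      have hmR2 : (m:ℝ) ≤ ((g:ℝ) * (s + 1)) ^ 2 := by
        have h1 : m ≤ g * ((s+1) * (s+1)) := by nlinarith [hmgP, hsP, hg0]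
        have h2 : (m:ℝ) ≤ (g:ℝ) * ((s+1) * (s+1)) := by exact_mod_cast h1
        nlinarith [hG]
      have h3 : (m:ℝ) ^ (1/2:ℝ) ≤ (g:ℝ) * (s + 1) :=
        rpow_half_le (by positivity) (by positivity) hmR2
      have h4 : (s:ℝ) ≤ (N:ℝ) := by exact_mod_cast (le_max_right m' s)
      have h5 : (g:ℝ) ≤ (m:ℝ)^(1/2:ℝ) / 2 := by linarith
      rw [div_le_iff₀ (by positivity)]
      nlinarith [h3, h4, h5, hG0, mul_le_mul_of_nonneg_left h4 (le_of_lt hG0)]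
  have hNpos : (0:ℝ) < (N:ℝ) := by
    have := hNlow
    have h0 : (0:ℝ) < (m:ℝ) ^ (1 - δ₀/2) / (2*(g:ℝ)) := by positivity
    linarith
  -- D bound
  have hmr0 : (0:ℝ) < (m:ℝ) ^ (1 - δ₀/2) := Real.rpow_pos_of_pos hm0R _
  have hDle : (D:ℝ) ≤ (g:ℝ)^2 * (m:ℝ) ^ (δ₀/2) := by
    have h1 : (D:ℝ) ≤ (P:ℝ) / ((2 * N : ℕ) : ℝ) := Nat.cast_div_le
    have h2 : ((2 * N : ℕ) : ℝ) = 2 * (N:ℝ) := by push_cast; ring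
    have hcR : (P:ℝ) ≤ (g:ℝ) * m := by exact_mod_cast hc
    have hden : (m:ℝ) ^ (1 - δ₀/2) / (g:ℝ) ≤ 2 * (N:ℝ) := by
      rw [div_le_iff₀ hG0]
      rw [div_le_iff₀ (show (0:ℝ) < 2 * g by positivity)] at hNlow
      nlinarith [hNlow]
    have h3 : (P:ℝ) / (2 * (N:ℝ)) ≤ ((g:ℝ) * m) / ((m:ℝ) ^ (1 - δ₀/2) / (g:ℝ)) :=
      div_le_div₀ (by positivity) hcR (by positivity) hden
    have h5 : (m:ℝ)^(δ₀/2) * (m:ℝ)^(1-δ₀/2) = (m:ℝ) := by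
      rw [← Real.rpow_add hm0R]
      norm_num
    have heq : (g:ℝ) * m / ((m:ℝ)^(1-δ₀/2) / (g:ℝ)) = (g:ℝ)^2 * (m:ℝ)^(δ₀/2) := by
      rw [div_div_eq_mul_div, div_eq_iff (ne_of_gt hmr0)]
      calc (g:ℝ) * m * g = (g:ℝ)^2 * ((m:ℝ)^(δ₀/2) * (m:ℝ)^(1-δ₀/2)) := by rw [h5]; ring
        _ = (g:ℝ)^2 * (m:ℝ)^(δ₀/2) * (m:ℝ)^(1-δ₀/2) := by ring
    rw [← heq]
    calc (D:ℝ) ≤ (P:ℝ) / ((2 * N : ℕ) : ℝ) := h1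
      _ = (P:ℝ) / (2 * (N:ℝ)) := by rw [h2]
      _ ≤ _ := h3
  -- sqrt P bound
  have hSq : ((Nat.sqrt P : ℕ) : ℝ) ≤ (g:ℝ) * (m:ℝ) ^ (1/2:ℝ) := by
    have h2 : ((Nat.sqrt P : ℕ):ℝ) ^ 2 ≤ (P:ℝ) := by exact_mod_cast Nat.sqrt_le' P
    have hcR : (P:ℝ) ≤ (g:ℝ) * m := by exact_mod_cast hc
    have h3 : ((Nat.sqrt P : ℕ):ℝ) ^ 2 ≤ ((g:ℝ) * (m:ℝ)^(1/2:ℝ)) ^ 2 := by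
      calc ((Nat.sqrt P : ℕ):ℝ) ^ 2 ≤ (P:ℝ) := h2
        _ ≤ (g:ℝ) * m := hcR
        _ ≤ ((g:ℝ) * (m:ℝ)^(1/2:ℝ)) ^ 2 := by nlinarith [hsq2, hG, hm0R]
    exact le_of_sq_le_sq' (by positivity) (by positivity) h3
  -- badB bound
  have hBcle : (Bc:ℝ) ≤ (g:ℝ)^2 * (m:ℝ) ^ (1 - δ₀) := by
    have h1 : (Bc:ℝ) ≤ ((g^2*m : ℕ):ℝ) ^ (1 - δ) := hbB
    have h2 : ((g^2*m : ℕ):ℝ) = (g:ℝ)^2 * m := by push_cast; ring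
    have h3 : (1:ℝ) ≤ (g:ℝ)^2 * m := by nlinarith
    have h4 : ((g:ℝ)^2 * m) ^ (1-δ) ≤ ((g:ℝ)^2 * m) ^ (1-δ₀) :=
      Real.rpow_le_rpow_of_exponent_le h3
        (by have h := min_le_left δ 1; have h' : δ₀ ≤ δ := h; linarith)
    have h5 : ((g:ℝ)^2 * m) ^ (1-δ₀) = ((g:ℝ)^2) ^ (1-δ₀) * (m:ℝ) ^ (1-δ₀) :=
      Real.mul_rpow (by positivity) (by positivity)
    have h6 : ((g:ℝ)^2) ^ (1-δ₀) ≤ (g:ℝ)^2 := by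
      calc ((g:ℝ)^2) ^ (1-δ₀) ≤ ((g:ℝ)^2) ^ (1:ℝ) :=
            Real.rpow_le_rpow_of_exponent_le (by nlinarith) (by linarith)
        _ = (g:ℝ)^2 := Real.rpow_one _
    have h7 : (0:ℝ) ≤ (m:ℝ) ^ (1-δ₀) := Real.rpow_nonneg (by positivity) _
    calc (Bc:ℝ) ≤ ((g:ℝ)^2 * m) ^ (1-δ) := by rw [← h2]; exact h1
      _ ≤ ((g:ℝ)^2 * m) ^ (1-δ₀) := h4
      _ = ((g:ℝ)^2) ^ (1-δ₀) * (m:ℝ) ^ (1-δ₀) := h5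
      _ ≤ (g:ℝ)^2 * (m:ℝ) ^ (1-δ₀) := by nlinarith
  -- assemble
  have hcast : ((((Finset.Icc m' m).filter fun n =>
      ¬ EKNormalInt g ε k (n ^ 2 / P)).card : ℕ) : ℝ) ≤ ((D:ℝ) + 1) * (Bc:ℝ)
        + (((Nat.sqrt P : ℕ):ℝ) + 1) := by
    exact_mod_cast hkey
  rw [Real.norm_eq_abs, Real.norm_eq_abs, abs_of_nonneg (by positivity),
    abs_of_nonneg (by positivity), one_mul]
  set x : ℝ := (m:ℝ) ^ (δ₀/2)
  set y : ℝ := (m:ℝ) ^ (1 - δ₀)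
  set z : ℝ := (m:ℝ) ^ (1/2:ℝ)
  set w : ℝ := (m:ℝ) ^ (1 - δ₀/2)
  have hxy : x * y = w := by
    rw [← Real.rpow_add hm0R]
    rw [show δ₀/2 + (1-δ₀) = 1 - δ₀/2 by ring]
  have hx0 : 0 ≤ x := Real.rpow_nonneg (by positivity) _
  have hy0 : 0 ≤ y := Real.rpow_nonneg (by positivity) _
  have hz0 : 0 ≤ z := Real.rpow_nonneg (by positivity) _
  have hw0 : 0 ≤ w := Real.rpow_nonneg (by positivity) _
  have hm00 : (m:ℝ) ^ (0:ℝ) = 1 := Real.rpow_zero _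
  have hmain : ((D:ℝ) + 1) * (Bc:ℝ) + (((Nat.sqrt P : ℕ):ℝ) + 1)
      ≤ (g:ℝ)^4 * (w + (y + (z + (m:ℝ)^(0:ℝ)))) := by
    have h1 : ((D:ℝ) + 1) * (Bc:ℝ) ≤ ((g:ℝ)^2 * x + 1) * ((g:ℝ)^2 * y) :=
      mul_le_mul (by linarith [hDle]) hBcle (Nat.cast_nonneg _) (by positivity)
    have hg2 : (g:ℝ)^2 ≤ (g:ℝ)^4 := pow_le_pow_right₀ (by linarith) (by norm_num)
    have hg1' : (g:ℝ) ≤ (g:ℝ)^4 := by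
      calc (g:ℝ) = (g:ℝ)^1 := (pow_one _).symm
        _ ≤ (g:ℝ)^4 := pow_le_pow_right₀ (by linarith) (by norm_num)
    have hg14 : (1:ℝ) ≤ (g:ℝ)^4 := by linarith
    have h2 : ((g:ℝ)^2 * x + 1) * ((g:ℝ)^2 * y) = (g:ℝ)^4 * w + (g:ℝ)^2 * y := by
      rw [← hxy]; ring
    have t1 : (g:ℝ)^2 * y ≤ (g:ℝ)^4 * y := mul_le_mul_of_nonneg_right hg2 hy0
    have t2 : (g:ℝ) * z ≤ (g:ℝ)^4 * z := mul_le_mul_of_nonneg_right hg1' hz0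
    rw [hm00]
    linarith [hSq, h1, h2, t1, t2, hg14]
  calc ((((Finset.Icc m' m).filter fun n =>
        ¬ EKNormalInt g ε k (n ^ 2 / P)).card : ℕ) : ℝ)
      ≤ ((D:ℝ) + 1) * (Bc:ℝ) + (((Nat.sqrt P : ℕ):ℝ) + 1) := hcast
    _ ≤ _ := hmain
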